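/- Let Γ be a countable discrete group and Λ ≤ Γ an amenable subgroup which is singular in Γ. Then Λ is maximal amenable in Γ: every amenable subgroup H of Γ with Λ ≤ H satisfies H = Λ. -/

import Mathlib

open scoped BoundedContinuousFunction

/-- A discrete group `Λ` is amenable if there exists a left-invariant mean on the space of
bounded real-valued functions on `Λ`: a linear functional `m` with `m 1 = 1`, `m f ≥ 0`
whenever `f ≥ 0`, and `m (x ↦ f (t⁻¹ x)) = m f` for all `t ∈ Λ` and bounded `f`. -/
def IsAmenable (Λ : Type*) [Group Λ] : Prop :=
  letI : TopologicalSpace Λ := ⊥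
  ∃ m : (Λ →ᵇ ℝ) →ₗ[ℝ] ℝ,
    m 1 = 1 ∧
    (∀ f : Λ →ᵇ ℝ, (∀ x, 0 ≤ f x) → 0 ≤ m f) ∧
    ∀ (t : Λ) (f : Λ →ᵇ ℝ),
      m (f.compContinuous ⟨fun x => t⁻¹ * x, continuous_bot⟩) = m f

/-- A witness that `Λ` is a singular subgroup of `Γ`: a nonempty compact Hausdorff space `X`
with a continuous action of `Γ` by homeomorphisms such that for every `Λ`-invariant regular
Borel probability measure `μ` on `X` and every `g ∉ Λ`, the push-forward `g · μ` and `μ` are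
mutually singular. -/
structure SingularityWitness {Γ : Type*} [Group Γ] (Λ : Subgroup Γ) where
  /-- The compact `Γ`-space. -/
  X : Type
  [ts : TopologicalSpace X]
  [ms : MeasurableSpace X]
  [bs : BorelSpace X]
  [cs : CompactSpace X]
  [t2 : T2Space X]
  [ne : Nonempty X]
  /-- The action of `Γ` on `X` by homeomorphisms. -/
  ρ : Γ → X ≃ₜ X
  ρ_one : ρ 1 = Homeomorph.refl X
  ρ_mul : ∀ g h : Γ, ρ (g * h) = (ρ h).trans (ρ g)
  singular : ∀ μ : MeasureTheory.Measure X, MeasureTheory.IsProbabilityMeasure μ →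
    μ.Regular → (∀ t ∈ Λ, μ.map (ρ t) = μ) →
    ∀ g ∉ Λ, (μ.map (ρ g)).MutuallySingular μ

/-- `Λ` is a singular subgroup of `Γ`. -/
def IsSingularIn {Γ : Type*} [Group Γ] (Λ : Subgroup Γ) : Prop :=
  Nonempty (SingularityWitness Λ)

open scoped BoundedContinuousFunction
open MeasureTheory TopologicalSpace Set
set_option linter.unusedSectionVars false

noncomputable section MeanAux

variable {G : Type*} [Group G] [TopologicalSpace G] [DiscreteTopology G]
variable {X : Type} [TopologicalSpace X] [CompactSpace X] [T2Space X]
variable (ρ : G → X ≃ₜ X)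
variable (m : (G →ᵇ ℝ) →ₗ[ℝ] ℝ)
variable (x₀ : X)

/-- Orbit map: push a bounded continuous function on `X` to one on `G` (discrete). -/
def orbMap (f : X →ᵇ ℝ) : G →ᵇ ℝ :=
  ⟨⟨fun g => f (ρ g x₀), continuous_of_discreteTopology⟩,
    f.map_bounded'.imp fun _ hC _ _ => hC _ _⟩

@[simp] lemma orbMap_apply (f : X →ᵇ ℝ) (g : G) : orbMap ρ x₀ f g = f (ρ g x₀) := rfl

/-- The positive functional on `C(X)` obtained by composing with the orbit map. -/
def Phi (f : X →ᵇ ℝ) : ℝ := m (orbMap ρ x₀ f)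

lemma orbMap_add (f g : X →ᵇ ℝ) : orbMap ρ x₀ (f + g) = orbMap ρ x₀ f + orbMap ρ x₀ g := by
  ext z; simp

lemma orbMap_one : orbMap ρ x₀ (1 : X →ᵇ ℝ) = 1 := by
  ext z; simp

lemma Phi_add (f g : X →ᵇ ℝ) : Phi ρ m x₀ (f + g) = Phi ρ m x₀ f + Phi ρ m x₀ g := by
  rw [Phi, orbMap_add, map_add]; rfl

lemma Phi_nonneg (hpos : ∀ f : G →ᵇ ℝ, (∀ x, 0 ≤ f x) → 0 ≤ m f)
    {f : X →ᵇ ℝ} (hf : ∀ x, 0 ≤ f x) : 0 ≤ Phi ρ m x₀ f :=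
  hpos _ fun g => hf (ρ g x₀)

lemma Phi_mono (hpos : ∀ f : G →ᵇ ℝ, (∀ x, 0 ≤ f x) → 0 ≤ m f)
    {f g : X →ᵇ ℝ} (hfg : ∀ x, f x ≤ g x) : Phi ρ m x₀ f ≤ Phi ρ m x₀ g := by
  have h := hpos (orbMap ρ x₀ g - orbMap ρ x₀ f) (fun z => by
    simp only [BoundedContinuousFunction.coe_sub, Pi.sub_apply, sub_nonneg, orbMap_apply]
    exact hfg _)
  rw [map_sub] at h
  rw [Phi, Phi]; linarith

end MeanAux

noncomputable section ContentAux

set_option linter.unusedSectionVars false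

variable {G : Type*} [Group G] [TopologicalSpace G] [DiscreteTopology G]
variable {X : Type} [TopologicalSpace X] [CompactSpace X] [T2Space X]
variable (ρ : G → X ≃ₜ X)
variable (m : (G →ᵇ ℝ) →ₗ[ℝ] ℝ)
variable (x₀ : X)

lemma Phi_comp (ρ_mul : ∀ g h : G, ρ (g * h) = (ρ h).trans (ρ g))
    (hminv : ∀ (t : G) (f : G →ᵇ ℝ),
      m (f.compContinuous ⟨fun x => t⁻¹ * x, continuous_of_discreteTopology⟩) = m f)
    (t : G) (f : X →ᵇ ℝ) :
    Phi ρ m x₀ (f.compContinuous ((ρ t : X ≃ₜ X) : C(X, X))) = Phi ρ m x₀ f := by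
  have h := hminv t⁻¹ (orbMap ρ x₀ f)
  rw [Phi, Phi, ← h]
  congr 1
  ext g
  simp only [orbMap_apply, BoundedContinuousFunction.compContinuous_apply,
    ContinuousMap.coe_mk, ContinuousMap.coe_coe, inv_inv]
  rw [ρ_mul]
  rfl

lemma rho_symm_apply (ρ_one : ρ 1 = Homeomorph.refl X)
    (ρ_mul : ∀ g h : G, ρ (g * h) = (ρ h).trans (ρ g)) (t : G) (x : X) :
    (ρ t).symm x = ρ t⁻¹ x := by
  have key : ρ t (ρ t⁻¹ x) = x := by
    have := congrArg (fun e : X ≃ₜ X => e x) (ρ_mul t t⁻¹)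
    simp only [mul_inv_cancel, ρ_one] at this
    simpa [Homeomorph.trans_apply] using this.symm
  conv_lhs => rw [← key]
  rw [Homeomorph.symm_apply_apply]

/-- The set of test functions dominating `1` on `K`. -/
def testFns (K : Set X) : Set (X →ᵇ ℝ) := {f | (∀ x, 0 ≤ f x) ∧ ∀ x ∈ K, 1 ≤ f x}

lemma one_mem_testFns (K : Set X) : (1 : X →ᵇ ℝ) ∈ testFns K :=
  ⟨fun x => by simp, fun x _ => by simp⟩

/-- Riesz-type content associated to the functional `Phi`. -/
def cnt (K : Set X) : ℝ := sInf (Phi ρ m x₀ '' testFns K)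

variable (hpos : ∀ f : G →ᵇ ℝ, (∀ x, 0 ≤ f x) → 0 ≤ m f)

section
include hpos

lemma cnt_bddBelow (K : Set X) : BddBelow (Phi ρ m x₀ '' testFns K) :=
  ⟨0, by rintro r ⟨f, hf, rfl⟩; exact Phi_nonneg ρ m x₀ hpos hf.1⟩

lemma cnt_le {K : Set X} {f : X →ᵇ ℝ} (hf : f ∈ testFns K) :
    cnt ρ m x₀ K ≤ Phi ρ m x₀ f :=
  csInf_le (cnt_bddBelow ρ m x₀ hpos K) ⟨f, hf, rfl⟩

lemma cnt_nonempty (K : Set X) : (Phi ρ m x₀ '' testFns K).Nonempty :=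
  ⟨_, 1, one_mem_testFns K, rfl⟩

lemma cnt_nonneg (K : Set X) : 0 ≤ cnt ρ m x₀ K :=
  le_csInf (cnt_nonempty ρ m x₀ hpos K)
    (by rintro r ⟨f, hf, rfl⟩; exact Phi_nonneg ρ m x₀ hpos hf.1)

lemma cnt_mono {K₁ K₂ : Set X} (h : K₁ ⊆ K₂) : cnt ρ m x₀ K₁ ≤ cnt ρ m x₀ K₂ :=
  le_csInf (cnt_nonempty ρ m x₀ hpos K₂) (by
    rintro r ⟨f, hf, rfl⟩
    exact cnt_le ρ m x₀ hpos ⟨hf.1, fun x hx => hf.2 x (h hx)⟩)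

lemma Phi_one (hm1 : m 1 = 1) : Phi ρ m x₀ (1 : X →ᵇ ℝ) = 1 := by
  rw [Phi, orbMap_one, hm1]

lemma cnt_univ (hm1 : m 1 = 1) : cnt ρ m x₀ (univ : Set X) = 1 := by
  refine le_antisymm ?_ ?_
  · have := cnt_le ρ m x₀ hpos (one_mem_testFns (univ : Set X))
    rwa [Phi_one ρ m x₀ hpos hm1] at this
  · refine le_csInf (cnt_nonempty ρ m x₀ hpos _) ?_
    rintro r ⟨f, hf, rfl⟩
    have := Phi_mono ρ m x₀ hpos (f := 1) (g := f) (fun x => by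
      simpa using hf.2 x (mem_univ x))
    rwa [Phi_one ρ m x₀ hpos hm1] at this

lemma cnt_union_le (K₁ K₂ : Set X) :
    cnt ρ m x₀ (K₁ ∪ K₂) ≤ cnt ρ m x₀ K₁ + cnt ρ m x₀ K₂ := by
  refine le_of_forall_pos_le_add fun ε hε => ?_
  obtain ⟨r₁, ⟨f₁, hf₁, rfl⟩, h₁⟩ :=
    exists_lt_of_csInf_lt (cnt_nonempty ρ m x₀ hpos K₁)
      (lt_add_of_pos_right (cnt ρ m x₀ K₁) (half_pos hε))
  obtain ⟨r₂, ⟨f₂, hf₂, rfl⟩, h₂⟩ :=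
    exists_lt_of_csInf_lt (cnt_nonempty ρ m x₀ hpos K₂)
      (lt_add_of_pos_right (cnt ρ m x₀ K₂) (half_pos hε))
  have hmem : f₁ + f₂ ∈ testFns (K₁ ∪ K₂) := by
    constructor
    · intro x; simpa using add_nonneg (hf₁.1 x) (hf₂.1 x)
    · rintro x (hx | hx)
      · have := hf₁.2 x hx
        have := hf₂.1 x
        simp only [BoundedContinuousFunction.coe_add, Pi.add_apply]; linarith
      · have := hf₂.2 x hx
        have := hf₁.1 x
        simp only [BoundedContinuousFunction.coe_add, Pi.add_apply]; linarith
  calc cnt ρ m x₀ (K₁ ∪ K₂) ≤ Phi ρ m x₀ (f₁ + f₂) := cnt_le ρ m x₀ hpos hmem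
    _ = Phi ρ m x₀ f₁ + Phi ρ m x₀ f₂ := Phi_add ρ m x₀ f₁ f₂
    _ ≤ (cnt ρ m x₀ K₁ + ε / 2) + (cnt ρ m x₀ K₂ + ε / 2) := by linarith
    _ = cnt ρ m x₀ K₁ + cnt ρ m x₀ K₂ + ε := by ring

lemma cnt_disjoint_add_le (K₁ K₂ : Set X) (h₁ : IsClosed K₁) (h₂ : IsClosed K₂)
    (hd : Disjoint K₁ K₂) :
    cnt ρ m x₀ K₁ + cnt ρ m x₀ K₂ ≤ cnt ρ m x₀ (K₁ ∪ K₂) := by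
  refine le_csInf (cnt_nonempty ρ m x₀ hpos _) ?_
  rintro r ⟨f, ⟨hf0, hf1⟩, rfl⟩
  obtain ⟨u, hu0, hu1, hu01⟩ := exists_continuous_zero_one_of_isClosed h₁ h₂ hd
  set ub : X →ᵇ ℝ := BoundedContinuousFunction.mkOfCompact u with hub
  have hub_apply : ∀ x, ub x = u x := fun x => rfl
  have hg₁ : f * (1 - ub) ∈ testFns K₁ := by
    constructor
    · intro x
      have := (hu01 x).2
      have := hf0 x
      simp only [BoundedContinuousFunction.coe_mul, BoundedContinuousFunction.coe_sub,
        BoundedContinuousFunction.coe_one, Pi.mul_apply, Pi.sub_apply, Pi.one_apply, hub_apply]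
      nlinarith
    · intro x hx
      have h0 : u x = 0 := hu0 hx
      have := hf1 x (Or.inl hx)
      simp only [BoundedContinuousFunction.coe_mul, BoundedContinuousFunction.coe_sub,
        BoundedContinuousFunction.coe_one, Pi.mul_apply, Pi.sub_apply, Pi.one_apply, hub_apply,
        h0]
      linarith
  have hg₂ : f * ub ∈ testFns K₂ := by
    constructor
    · intro x
      have := (hu01 x).1
      have := hf0 x
      simp only [BoundedContinuousFunction.coe_mul, Pi.mul_apply, hub_apply]
      nlinarith
    · intro x hx
      have h1 : u x = 1 := hu1 hx
      have := hf1 x (Or.inr hx)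
      simp only [BoundedContinuousFunction.coe_mul, Pi.mul_apply, hub_apply, h1]
      linarith
  have hsum : f * (1 - ub) + f * ub = f := by
    ext x; simp; ring
  calc cnt ρ m x₀ K₁ + cnt ρ m x₀ K₂
      ≤ Phi ρ m x₀ (f * (1 - ub)) + Phi ρ m x₀ (f * ub) :=
        add_le_add (cnt_le ρ m x₀ hpos hg₁) (cnt_le ρ m x₀ hpos hg₂)
    _ = Phi ρ m x₀ (f * (1 - ub) + f * ub) := (Phi_add ρ m x₀ _ _).symm
    _ = Phi ρ m x₀ f := by rw [hsum]

lemma cnt_image_le (ρ_one : ρ 1 = Homeomorph.refl X)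
    (ρ_mul : ∀ g h : G, ρ (g * h) = (ρ h).trans (ρ g))
    (hminv : ∀ (t : G) (f : G →ᵇ ℝ),
      m (f.compContinuous ⟨fun x => t⁻¹ * x, continuous_of_discreteTopology⟩) = m f)
    (t : G) (K : Set X) : cnt ρ m x₀ (ρ t '' K) ≤ cnt ρ m x₀ K := by
  refine le_csInf (cnt_nonempty ρ m x₀ hpos K) ?_
  rintro r ⟨f, ⟨hf0, hf1⟩, rfl⟩
  set f' : X →ᵇ ℝ := f.compContinuous (((ρ t).symm : X ≃ₜ X) : C(X, X)) with hf'
  have hf'mem : f' ∈ testFns (ρ t '' K) := by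
    constructor
    · intro x; exact hf0 _
    · rintro y ⟨x, hx, rfl⟩
      have : f' (ρ t x) = f x := by
        simp [hf', BoundedContinuousFunction.compContinuous_apply]
      rw [this]; exact hf1 x hx
  have hPhi : Phi ρ m x₀ f' = Phi ρ m x₀ f := by
    have : f' = f.compContinuous ((ρ t⁻¹ : X ≃ₜ X) : C(X, X)) := by
      ext x
      simp [hf', BoundedContinuousFunction.compContinuous_apply,
        rho_symm_apply ρ ρ_one ρ_mul t x]
    rw [this, Phi_comp ρ m x₀ ρ_mul hminv t⁻¹ f]
  calc cnt ρ m x₀ (ρ t '' K) ≤ Phi ρ m x₀ f' := cnt_le ρ m x₀ hpos hf'mem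
    _ = Phi ρ m x₀ f := hPhi

lemma cnt_image (ρ_one : ρ 1 = Homeomorph.refl X)
    (ρ_mul : ∀ g h : G, ρ (g * h) = (ρ h).trans (ρ g))
    (hminv : ∀ (t : G) (f : G →ᵇ ℝ),
      m (f.compContinuous ⟨fun x => t⁻¹ * x, continuous_of_discreteTopology⟩) = m f)
    (t : G) (K : Set X) : cnt ρ m x₀ (ρ t '' K) = cnt ρ m x₀ K := by
  refine le_antisymm (cnt_image_le ρ m x₀ hpos ρ_one ρ_mul hminv t K) ?_
  have himg : ρ t⁻¹ '' (ρ t '' K) = K := by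
    rw [← image_comp]
    have : (ρ t⁻¹ ∘ ρ t) = id := by
      funext x
      have := congrArg (fun e : X ≃ₜ X => e x) (ρ_mul t⁻¹ t)
      simp only [inv_mul_cancel, ρ_one] at this
      simpa [Homeomorph.trans_apply] using this.symm
    rw [this, image_id]
  have := cnt_image_le ρ m x₀ hpos ρ_one ρ_mul hminv t⁻¹ (ρ t '' K)
  rwa [himg] at this

end

end ContentAux

noncomputable section MeasureAux

open scoped ENNReal NNReal

set_option linter.unusedSectionVars false

variable {G : Type*} [Group G] [TopologicalSpace G] [DiscreteTopology G]
variable {X : Type} [TopologicalSpace X] [CompactSpace X] [T2Space X]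
variable (ρ : G → X ≃ₜ X)
variable (m : (G →ᵇ ℝ) →ₗ[ℝ] ℝ)
variable (x₀ : X)

/-- The content associated to an invariant mean via the orbit functional. -/
def meanContent (hpos : ∀ f : G →ᵇ ℝ, (∀ x, 0 ≤ f x) → 0 ≤ m f) : Content X where
  toFun K := Real.toNNReal (cnt ρ m x₀ (K : Set X))
  mono' K₁ K₂ h := Real.toNNReal_mono (cnt_mono ρ m x₀ hpos h)
  sup_disjoint' K₁ K₂ hd h₁ h₂ := by
    have heq : cnt ρ m x₀ ((K₁ ⊔ K₂ : Compacts X) : Set X)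
        = cnt ρ m x₀ (K₁ : Set X) + cnt ρ m x₀ (K₂ : Set X) := by
      rw [Compacts.coe_sup]
      exact le_antisymm (cnt_union_le ρ m x₀ hpos _ _)
        (cnt_disjoint_add_le ρ m x₀ hpos _ _ h₁ h₂ hd)
    rw [heq, Real.toNNReal_add (cnt_nonneg ρ m x₀ hpos _) (cnt_nonneg ρ m x₀ hpos _)]
  sup_le' K₁ K₂ := by
    rw [← Real.toNNReal_add (cnt_nonneg ρ m x₀ hpos _) (cnt_nonneg ρ m x₀ hpos _)]
    refine Real.toNNReal_mono ?_
    rw [Compacts.coe_sup]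
    exact cnt_union_le ρ m x₀ hpos _ _

variable [MeasurableSpace X] [BorelSpace X]
variable (hpos : ∀ f : G →ᵇ ℝ, (∀ x, 0 ≤ f x) → 0 ≤ m f)

/-- The measure associated to the mean content. -/
def meanMeasure : Measure X := (meanContent ρ m x₀ hpos).measure

instance : (meanMeasure ρ m x₀ hpos).Regular := Content.regular _

lemma meanMeasure_univ (hm1 : m 1 = 1) : meanMeasure ρ m x₀ hpos univ = 1 := by
  rw [meanMeasure, Content.measure_apply _ MeasurableSet.univ,
    Content.outerMeasure_of_isOpen _ univ isOpen_univ,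
    Content.innerContent_of_isCompact _ isCompact_univ isOpen_univ]
  show ((Real.toNNReal (cnt ρ m x₀ ((⟨univ, isCompact_univ⟩ : Compacts X) : Set X))) : ℝ≥0∞) = 1
  rw [Compacts.coe_mk, cnt_univ ρ m x₀ hpos hm1]
  simp

theorem meanMeasure_prob (hm1 : m 1 = 1) : IsProbabilityMeasure (meanMeasure ρ m x₀ hpos) :=
  ⟨meanMeasure_univ ρ m x₀ hpos hm1⟩

lemma meanMeasure_map (ρ_one : ρ 1 = Homeomorph.refl X)
    (ρ_mul : ∀ g h : G, ρ (g * h) = (ρ h).trans (ρ g))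
    (hminv : ∀ (t : G) (f : G →ᵇ ℝ),
      m (f.compContinuous ⟨fun x => t⁻¹ * x, continuous_of_discreteTopology⟩) = m f)
    (t : G) : (meanMeasure ρ m x₀ hpos).map (ρ t) = meanMeasure ρ m x₀ hpos := by
  have hinv : ∀ ⦃K : Compacts X⦄,
      (meanContent ρ m x₀ hpos) (K.map (ρ t) (ρ t).continuous)
        = (meanContent ρ m x₀ hpos) K := by
    intro K
    show ((Real.toNNReal (cnt ρ m x₀ _)) : ℝ≥0∞) = Real.toNNReal (cnt ρ m x₀ _)
    rw [Compacts.coe_map]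
    rw [cnt_image ρ m x₀ hpos ρ_one ρ_mul hminv t (K : Set X)]
  refine Measure.ext fun s hs => ?_
  rw [Measure.map_apply (ρ t).continuous.measurable hs, meanMeasure,
    Content.measure_apply _ (hs.preimage (ρ t).continuous.measurable),
    Content.measure_apply _ hs,
    Content.outerMeasure_preimage _ (ρ t) hinv s]

end MeasureAux

/-- An amenable subgroup which is singular in `Γ` is maximal amenable:
every amenable subgroup `H` of `Γ` containing `Λ` equals `Λ`. -/
theorem maximalAmenable_of_isSingularIn
    {Γ : Type} [Group Γ] [Countable Γ] (Λ : Subgroup Γ)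
    (hamen : IsAmenable Λ) (hsing : IsSingularIn Λ) :
    ∀ H : Subgroup Γ, IsAmenable H → Λ ≤ H → H = Λ := by
  intro H hH hΛH
  obtain ⟨w⟩ := hsing
  letI := w.ts; letI := w.ms; letI := w.bs; letI := w.cs; letI := w.t2; letI := w.ne
  letI : TopologicalSpace ↥H := ⊥
  haveI : DiscreteTopology ↥H := ⟨rfl⟩
  obtain ⟨m, hm1, hmpos, hminv⟩ := hH
  set ρH : ↥H → w.X ≃ₜ w.X := fun h => w.ρ ↑h with hρH
  have ρH_one : ρH 1 = Homeomorph.refl w.X := by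
    simpa [hρH] using w.ρ_one
  have ρH_mul : ∀ g h : ↥H, ρH (g * h) = (ρH h).trans (ρH g) := fun g h => by
    simpa [hρH] using w.ρ_mul ↑g ↑h
  obtain ⟨x₀⟩ := w.ne
  set μ : MeasureTheory.Measure w.X := meanMeasure ρH m x₀ hmpos with hμ
  haveI hprob : MeasureTheory.IsProbabilityMeasure μ := meanMeasure_prob ρH m x₀ hmpos hm1
  have hreg : μ.Regular := Content.regular _
  have hmap : ∀ t : ↥H, μ.map (w.ρ ↑t) = μ := fun t =>
    meanMeasure_map ρH m x₀ hmpos ρH_one ρH_mul hminv t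
  have hΛ : ∀ t ∈ Λ, μ.map (w.ρ t) = μ := fun t ht => hmap ⟨t, hΛH ht⟩
  refine le_antisymm ?_ hΛH
  intro g hg
  by_contra hgΛ
  have hsingg := w.singular μ hprob hreg hΛ g hgΛ
  rw [hmap ⟨g, hg⟩] at hsingg
  have hzero : μ = 0 := (MeasureTheory.Measure.MutuallySingular.self_iff μ).mp hsingg
  have h1 : μ Set.univ = 1 := hprob.measure_univ
  rw [hzero] at h1
  simp at h1
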